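/- Consider a CIP with a fractional solution x* ∈ ℝ_{≥0}^n with Ax* ≥ b, a parameter α > 1, and general randomized rounding with parameter p ∈ [0,1]^n; let E_i ≡ ((Az)_i < b_i) for i ∈ [m]. Suppose Pr(⋀_{i=1}^m ¬E_i) > 0. Then for every q ≥ 1 and all column indices 1 ≤ j₁ < j₂ < … < j_q ≤ n: Pr(X_{j₁} = X_{j₂} = … = X_{j_q} = 1 | ⋀_{i=1}^m ¬E_i) ≤ (Π_{t=1}^q p_{j_t}) / (Π_{i ∈ R(j₁, …, j_q)} (1 − Pr(E_i))). -/

import Mathlib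

open MeasureTheory ProbabilityTheory

section CubeAux

noncomputable def cubeW {n : ℕ} (p : Fin n → ℝ) (a : Fin n → Bool) : ℝ :=
  ∏ j, (if a j then p j else 1 - p j)

lemma cubeW_nonneg {n : ℕ} {p : Fin n → ℝ} (hp : ∀ j, p j ∈ Set.Icc (0:ℝ) 1)
    (a : Fin n → Bool) : 0 ≤ cubeW p a :=
  Finset.prod_nonneg fun j _ => by
    rcases (hp j) with ⟨h0, h1⟩; cases a j <;> simp <;> linarith

lemma cubeW_supermod {n : ℕ} (p : Fin n → ℝ) (a b : Fin n → Bool) :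
    cubeW p a * cubeW p b = cubeW p (a ⊓ b) * cubeW p (a ⊔ b) := by
  unfold cubeW
  rw [← Finset.prod_mul_distrib, ← Finset.prod_mul_distrib]
  refine Finset.prod_congr rfl fun j _ => ?_
  simp only [Pi.inf_apply, Pi.sup_apply]
  rcases Bool.dichotomy (a j) with h1 | h1 <;> rcases Bool.dichotomy (b j) with h2 | h2 <;>
    simp only [h1, h2] <;> simp [mul_comm]

lemma cube_sum_prod {ι : Type*} [Fintype ι] [DecidableEq ι] (h : ι → Bool → ℝ) :
    ∑ a : ι → Bool, ∏ j, h j (a j) = ∏ j, (h j false + h j true) := by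
  have key := Finset.prod_univ_sum (fun _ : ι => (Finset.univ : Finset Bool)) (fun j v => h j v)
  rw [Fintype.piFinset_univ] at key
  rw [← key]
  exact Finset.prod_congr rfl fun j _ => by rw [Fintype.sum_bool]; ring

lemma cube_sum_one {n : ℕ} (p : Fin n → ℝ) : ∑ a : Fin n → Bool, cubeW p a = 1 := by
  unfold cubeW
  rw [cube_sum_prod (fun j v => if v then p j else 1 - p j)]
  simp

lemma cube_split {n : ℕ} (p : Fin n → ℝ) (u : Fin n → Prop) [DecidablePred u]
    (f g : (Fin n → Bool) → ℝ)
    (hf : ∀ a b, (∀ j, u j → a j = b j) → f a = f b)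
    (hg : ∀ a b, (∀ j, ¬ u j → a j = b j) → g a = g b) :
    ∑ a, cubeW p a * (f a * g a) =
      (∑ a, cubeW p a * f a) * (∑ a, cubeW p a * g a) := by
  classical
  set e := (Equiv.piEquivPiSubtypeProd u (fun _ => Bool)).symm with he
  have hsymm : ∀ (x : {j // u j} → Bool) (y : {j // ¬ u j} → Bool) (j : Fin n),
      e (x, y) j = if h : u j then x ⟨j, h⟩ else y ⟨j, h⟩ := by
    intro x y j
    simp [he, Equiv.piEquivPiSubtypeProd_symm_apply]
  set Wx : ({j // u j} → Bool) → ℝ := fun x => ∏ j, (if x j then p j else 1 - p j) with hWx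
  set Wy : ({j // ¬ u j} → Bool) → ℝ := fun y => ∏ j, (if y j then p j else 1 - p j) with hWy
  set F1 : ({j // u j} → Bool) → ℝ := fun x => f (e (x, fun _ => false)) with hF1
  set G1 : ({j // ¬ u j} → Bool) → ℝ := fun y => g (e ((fun _ => false), y)) with hG1
  have hw : ∀ x y, cubeW p (e (x, y)) = Wx x * Wy y := by
    intro x y
    unfold cubeW
    rw [← Fintype.prod_subtype_mul_prod_subtype u (fun j => if e (x, y) j then p j else 1 - p j)]
    congr 1
    · exact Finset.prod_congr rfl fun j _ => by rw [hsymm, dif_pos j.2]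
    · exact Finset.prod_congr rfl fun j _ => by rw [hsymm, dif_neg j.2]
  have hfe : ∀ x y, f (e (x, y)) = F1 x := fun x y =>
    hf _ _ fun j hj => by rw [hsymm, hsymm, dif_pos hj, dif_pos hj]
  have hge : ∀ x y, g (e (x, y)) = G1 y := fun x y =>
    hg _ _ fun j hj => by rw [hsymm, hsymm, dif_neg hj, dif_neg hj]
  have hWx1 : ∑ x, Wx x = 1 := by
    rw [hWx]; rw [cube_sum_prod (fun (j : {j // u j}) v => if v then p j else 1 - p j)]; simp
  have hWy1 : ∑ y, Wy y = 1 := by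
    rw [hWy]; rw [cube_sum_prod (fun (j : {j // ¬ u j}) v => if v then p j else 1 - p j)]; simp
  have hsum : ∀ (F : (Fin n → Bool) → ℝ), ∑ a, F a = ∑ x, ∑ y, F (e (x, y)) := by
    intro F
    rw [← Equiv.sum_comp e F, Fintype.sum_prod_type]
  rw [hsum (fun a => cubeW p a * (f a * g a)), hsum (fun a => cubeW p a * f a),
    hsum (fun a => cubeW p a * g a)]
  simp only [hw, hfe, hge]
  have h1 : ∀ x, ∑ y, Wx x * Wy y * F1 x = Wx x * F1 x := fun x => by
    rw [Finset.sum_congr rfl fun y _ => (by ring : Wx x * Wy y * F1 x = (Wx x * F1 x) * Wy y),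
      ← Finset.mul_sum, hWy1, mul_one]
  have h2 : ∑ x, ∑ y, Wx x * Wy y * G1 y = ∑ y, Wy y * G1 y := by
    have inner : ∀ x, ∑ y, Wx x * Wy y * G1 y = Wx x * ∑ y, Wy y * G1 y := fun x => by
      rw [Finset.mul_sum]
      exact Finset.sum_congr rfl fun y _ => by ring
    rw [Finset.sum_congr rfl fun x _ => inner x]
    have : ∀ x, Wx x * ∑ y, Wy y * G1 y = (∑ y, Wy y * G1 y) * Wx x := fun x => mul_comm _ _
    rw [Finset.sum_congr rfl fun x _ => this x, ← Finset.mul_sum, hWx1, mul_one]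
  have h3 : ∑ x, ∑ y, Wx x * Wy y * (F1 x * G1 y)
      = (∑ x, Wx x * F1 x) * (∑ y, Wy y * G1 y) := by
    rw [Finset.sum_mul_sum]
    exact Finset.sum_congr rfl fun x _ => Finset.sum_congr rfl fun y _ => by ring
  rw [h3, Finset.sum_congr rfl fun x _ => h1 x, h2]

lemma cube_fkg {n : ℕ} {p : Fin n → ℝ} (hp : ∀ j, p j ∈ Set.Icc (0:ℝ) 1)
    (f g : (Fin n → Bool) → ℝ) (hf0 : 0 ≤ f) (hg0 : 0 ≤ g)
    (hf : Monotone f) (hg : Monotone g) :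
    (∑ a, cubeW p a * f a) * (∑ a, cubeW p a * g a) ≤ ∑ a, cubeW p a * (f a * g a) := by
  have := fkg (μ := cubeW p) (f := f) (g := g) (fun a => cubeW_nonneg hp a) hf0 hg0 hf hg
      (fun a b => le_of_eq (cubeW_supermod p a b))
  rwa [cube_sum_one, one_mul] at this

end CubeAux

theorem cip_anti_fkg
    (m n : ℕ)
    (A : Fin m → Fin n → ℝ) (hA : ∀ i j, A i j ∈ Set.Icc (0 : ℝ) 1)
    (b : Fin m → ℝ) (hb : ∀ i, 1 ≤ b i)
    (c : Fin n → ℝ) (hc : ∀ j, c j ∈ Set.Icc (0 : ℝ) 1) (hcmax : ∃ j, c j = 1)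
    (x : Fin n → ℝ) (hx : ∀ j, 0 ≤ x j)
    (hAx : ∀ i, b i ≤ ∑ j, A i j * x j)
    (α : ℝ) (hα : 1 < α)
    (p : Fin n → ℝ) (hp : ∀ j, p j ∈ Set.Icc (0 : ℝ) 1)
    {Ω : Type*} [MeasureSpace Ω] [IsProbabilityMeasure (ℙ : Measure Ω)]
    (X : Fin n → Ω → ℝ) (hXmeas : ∀ j, Measurable (X j))
    (hX01 : ∀ j ω, X j ω = 0 ∨ X j ω = 1)
    (hindep : iIndepFun X ℙ)
    (hXp : ∀ j, (ℙ {ω | X j ω = 1}).toReal = p j)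
    (E : Fin m → Set Ω)
    (hE : ∀ i, E i = {ω | ∑ j, A i j * ((⌊α * x j⌋ : ℝ) + X j ω) < b i})
    (hZpos : 0 < ℙ (⋂ i, (E i)ᶜ))
    (q : ℕ) (hq : 1 ≤ q) (J : Fin q → Fin n) (hJ : StrictMono J) :
    (ℙ[|⋂ i, (E i)ᶜ] (⋂ t, {ω | X (J t) ω = 1})).toReal ≤
      (∏ t, p (J t)) /
        ∏ i ∈ Finset.univ.filter (fun i : Fin m => ∃ t, A i (J t) ≠ 0),
          (1 - (ℙ (E i)).toReal) := by
  classical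
  -- cube-side objects
  set val : Bool → ℝ := fun v => if v then 1 else 0 with hvaldef
  set Q : Fin m → (Fin n → Bool) → Prop :=
    fun i a => ∑ j, A i j * ((⌊α * x j⌋ : ℝ) + val (a j)) < b i with hQdef
  set pat : Ω → (Fin n → Bool) := fun ω j => if X j ω = 1 then true else false with hpatdef
  have hval : ∀ j ω, X j ω = val (pat ω j) := by
    intro j ω
    rcases hX01 j ω with h | h <;> simp [hpatdef, hvaldef, h]
  have hpat1 : ∀ j ω, (pat ω j = true) ↔ X j ω = 1 := by
    intro j ω; by_cases h : X j ω = 1 <;> simp [hpatdef, h]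
  set C : (Fin n → Bool) → Set Ω := fun a => ⋂ j, X j ⁻¹' {val (a j)} with hCdef
  have hCmem : ∀ ω a, ω ∈ C a ↔ pat ω = a := by
    intro ω a
    simp only [hCdef, Set.mem_iInter, Set.mem_preimage, Set.mem_singleton_iff]
    constructor
    · intro h
      funext j
      have hj := h j
      rcases Bool.dichotomy (a j) with h1 | h1
      · rw [h1] at hj ⊢
        simp only [hvaldef] at hj
        simp only [if_neg (Bool.false_ne_true)] at hj
        simp [hpatdef, hj]
      · rw [h1] at hj ⊢
        simp only [hvaldef, if_pos rfl] at hj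
        simp [hpatdef, hj]
    · intro h j
      rw [← h]
      exact hval j ω
  have hCmeas : ∀ a, MeasurableSet (C a) :=
    fun a => MeasurableSet.iInter fun j => hXmeas j (measurableSet_singleton _)
  have hCprob : ∀ a, ℙ (C a) = ∏ j, ℙ (X j ⁻¹' {val (a j)}) := by
    intro a
    have h := hindep.measure_inter_preimage_eq_mul (S := Finset.univ)
      (sets := fun j => {val (a j)}) (fun j _ => measurableSet_singleton _)
    simpa [hCdef] using h
  have hmeas1 : ∀ j, MeasurableSet {ω | X j ω = 1} :=
    fun j => hXmeas j (measurableSet_singleton 1)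
  have hprob1 : ∀ j, (ℙ (X j ⁻¹' {val true})).toReal = p j := by
    intro j
    have : X j ⁻¹' {val true} = {ω | X j ω = 1} := by
      ext ω; simp [hvaldef]
    rw [this, hXp j]
  have hprob0 : ∀ j, (ℙ (X j ⁻¹' {val false})).toReal = 1 - p j := by
    intro j
    have hset : X j ⁻¹' {val false} = {ω | X j ω = 1}ᶜ := by
      ext ω
      simp only [Set.mem_preimage, Set.mem_singleton_iff, Set.mem_compl_iff, Set.mem_setOf_eq,
        hvaldef, if_neg (Bool.false_ne_true)]
      constructor
      · intro h; rw [h]; norm_num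
      · intro h; rcases hX01 j ω with h0 | h0
        · exact h0
        · exact absurd h0 h
    rw [hset, prob_compl_eq_one_sub (hmeas1 j),
      ENNReal.toReal_sub_of_le prob_le_one (by norm_num), hXp j]
    norm_num
  have hCw : ∀ a, (ℙ (C a)).toReal = cubeW p a := by
    intro a
    rw [hCprob a, ENNReal.toReal_prod]
    refine Finset.prod_congr rfl fun j _ => ?_
    rcases Bool.dichotomy (a j) with h | h <;> rw [h]
    · rw [hprob0 j]; simp
    · rw [hprob1 j]; simp
  -- lifting predicates on the cube to probabilities
  set Ind : ((Fin n → Bool) → Prop) → (Fin n → Bool) → ℝ :=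
    fun Q' a => if Q' a then 1 else 0 with hInddef
  set WW : ((Fin n → Bool) → Prop) → ℝ := fun Q' => ∑ a, cubeW p a * Ind Q' a with hWWdef
  have hWW : ∀ (Q' : (Fin n → Bool) → Prop), (ℙ {ω | Q' (pat ω)}).toReal = WW Q' := by
    intro Q'
    have hset : {ω | Q' (pat ω)} = ⋃ a ∈ Finset.univ.filter Q', C a := by
      ext ω
      simp only [Set.mem_setOf_eq, Set.mem_iUnion, Finset.mem_filter, Finset.mem_univ, true_and,
        exists_prop]
      constructor
      · intro h; exact ⟨pat ω, h, (hCmem ω _).2 rfl⟩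
      · rintro ⟨a, hQ, hmem⟩; rwa [(hCmem ω a).1 hmem]
    have hdisj : Set.Pairwise ↑(Finset.univ.filter Q') (Function.onFun Disjoint C) := by
      intro a _ b _ hab
      refine Set.disjoint_left.2 fun ω ha hb => hab ?_
      rw [← (hCmem ω a).1 ha, (hCmem ω b).1 hb]
    rw [hset, measure_biUnion_finset hdisj (fun a _ => hCmeas a),
      ENNReal.toReal_sum (fun a _ => measure_ne_top _ _), hWWdef]
    rw [Finset.sum_filter]
    refine Finset.sum_congr rfl fun a _ => ?_
    by_cases h : Q' a <;> simp [hInddef, h, hCw a]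
  -- basic WW facts
  have hWWnn : ∀ Q', 0 ≤ WW Q' := by
    intro Q'
    refine Finset.sum_nonneg fun a _ => mul_nonneg (cubeW_nonneg hp a) ?_
    by_cases h : Q' a <;> simp [hInddef, h]
  have hWWmono : ∀ Q1 Q2 : ((Fin n → Bool) → Prop), (∀ a, Q1 a → Q2 a) → WW Q1 ≤ WW Q2 := by
    intro Q1 Q2 h
    refine Finset.sum_le_sum fun a _ => mul_le_mul_of_nonneg_left ?_ (cubeW_nonneg hp a)
    by_cases h1 : Q1 a
    · simp [hInddef, h1, h a h1]
    · by_cases h2 : Q2 a <;> simp [hInddef, h1, h2]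
  have hWWcongr : ∀ Q1 Q2 : ((Fin n → Bool) → Prop), (∀ a, Q1 a ↔ Q2 a) → WW Q1 = WW Q2 :=
    fun Q1 Q2 h => le_antisymm (hWWmono _ _ fun a => (h a).1) (hWWmono _ _ fun a => (h a).2)
  have hWWcompl : ∀ Q', WW (fun a => ¬ Q' a) = 1 - WW Q' := by
    intro Q'
    rw [hWWdef, eq_sub_iff_add_eq]
    rw [← Finset.sum_add_distrib, ← cube_sum_one p]
    refine Finset.sum_congr rfl fun a _ => ?_
    by_cases h : Q' a <;> simp [hInddef, h]
  -- monotonicity of the indicator of upper predicates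
  have hIndnn : ∀ Q', (0 : (Fin n → Bool) → ℝ) ≤ Ind Q' := by
    intro Q' a
    by_cases h : Q' a <;> simp [hInddef, h]
  have hIndmono : ∀ Q' : ((Fin n → Bool) → Prop), (∀ a b, a ≤ b → Q' a → Q' b) →
      Monotone (Ind Q') := by
    intro Q' hup a b hab
    by_cases h : Q' a
    · simp [hInddef, h, hup a b hab h]
    · by_cases h2 : Q' b <;> simp [hInddef, h, h2]
  have hIndmul : ∀ Q1 Q2 : ((Fin n → Bool) → Prop), ∀ a,
      Ind Q1 a * Ind Q2 a = Ind (fun a => Q1 a ∧ Q2 a) a := by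
    intro Q1 Q2 a
    by_cases h1 : Q1 a <;> by_cases h2 : Q2 a <;> simp [hInddef, h1, h2]
  -- antitonicity of Q i
  have hvmono : ∀ u v : Bool, u ≤ v → val u ≤ val v := by
    intro u v h
    cases u <;> cases v
    · exact le_rfl
    · simp only [hvaldef]; norm_num
    · exact absurd h (by decide)
    · exact le_rfl
  have hQanti : ∀ i, ∀ a b : Fin n → Bool, a ≤ b → Q i b → Q i a := by
    intro i a b hab h
    refine lt_of_le_of_lt (Finset.sum_le_sum fun j _ => ?_) h
    exact mul_le_mul_of_nonneg_left (add_le_add_right (hvmono _ _ (hab j)) _) (hA i j).1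
  -- key predicates
  set R : Finset (Fin m) := Finset.univ.filter (fun i : Fin m => ∃ t, A i (J t) ≠ 0) with hRdef
  set ok : (Fin n → Bool) → Prop := fun a => ∀ i, ¬ Q i a with hokdef
  set okRc : (Fin n → Bool) → Prop := fun a => ∀ i, (∀ t, A i (J t) = 0) → ¬ Q i a with hokRcdef
  set allJ : (Fin n → Bool) → Prop := fun a => ∀ t, a (J t) = true with hallJdef
  have hokRc_up : ∀ a b : Fin n → Bool, a ≤ b → okRc a → okRc b :=
    fun a b hab h i hz hQb => h i hz (hQanti i a b hab hQb)
  -- FKG induction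
  have claim : ∀ K : Finset (Fin m),
      WW okRc * ∏ i ∈ K, WW (fun a => ¬ Q i a) ≤
        WW (fun a => okRc a ∧ ∀ i ∈ K, ¬ Q i a) := by
    intro K
    induction K using Finset.induction_on with
    | empty =>
      rw [Finset.prod_empty, mul_one]
      exact le_of_eq (hWWcongr _ _ fun a => by simp)
    | insert _ _ hi IH =>
      rename_i i₀ K
      rw [Finset.prod_insert hi]
      have step1 : WW okRc * (WW (fun a => ¬ Q i₀ a) * ∏ i ∈ K, WW (fun a => ¬ Q i a))
          = (WW okRc * ∏ i ∈ K, WW (fun a => ¬ Q i a)) * WW (fun a => ¬ Q i₀ a) := by ring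
      rw [step1]
      calc (WW okRc * ∏ i ∈ K, WW (fun a => ¬ Q i a)) * WW (fun a => ¬ Q i₀ a)
          ≤ WW (fun a => okRc a ∧ ∀ i ∈ K, ¬ Q i a) * WW (fun a => ¬ Q i₀ a) :=
            mul_le_mul_of_nonneg_right IH (hWWnn _)
        _ ≤ WW (fun a => (okRc a ∧ ∀ i ∈ K, ¬ Q i a) ∧ ¬ Q i₀ a) := by
            have hkey := cube_fkg hp (Ind (fun a => okRc a ∧ ∀ i ∈ K, ¬ Q i a))
              (Ind (fun a => ¬ Q i₀ a)) (hIndnn _) (hIndnn _)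
              (hIndmono _ fun a b hab h =>
                ⟨hokRc_up a b hab h.1, fun i hi hQb => h.2 i hi (hQanti i a b hab hQb)⟩)
              (hIndmono _ fun a b hab h hQb => h (hQanti i₀ a b hab hQb))
            calc WW (fun a => okRc a ∧ ∀ i ∈ K, ¬ Q i a) * WW (fun a => ¬ Q i₀ a)
                ≤ ∑ a, cubeW p a *
                    (Ind (fun a => okRc a ∧ ∀ i ∈ K, ¬ Q i a) a * Ind (fun a => ¬ Q i₀ a) a) :=
                  hkey
              _ = WW (fun a => (okRc a ∧ ∀ i ∈ K, ¬ Q i a) ∧ ¬ Q i₀ a) := by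
                  have hpw : ∀ a, cubeW p a *
                      (Ind (fun a => okRc a ∧ ∀ i ∈ K, ¬ Q i a) a * Ind (fun a => ¬ Q i₀ a) a)
                      = cubeW p a *
                        Ind (fun a => (okRc a ∧ ∀ i ∈ K, ¬ Q i a) ∧ ¬ Q i₀ a) a := by
                    intro a
                    exact congrArg (fun z => cubeW p a * z)
                      (hIndmul (fun a => okRc a ∧ ∀ i ∈ K, ¬ Q i a) (fun a => ¬ Q i₀ a) a)
                  simp only [hWWdef]
                  exact Finset.sum_congr rfl fun a _ => hpw a
        _ = WW (fun a => okRc a ∧ ∀ i ∈ insert i₀ K, ¬ Q i a) := by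
            refine hWWcongr _ _ fun a => ?_
            constructor
            · rintro ⟨⟨h1, h2⟩, h3⟩
              refine ⟨h1, fun i hi => ?_⟩
              rcases Finset.mem_insert.1 hi with rfl | hi
              · exact h3
              · exact h2 i hi
            · rintro ⟨h1, h2⟩
              exact ⟨⟨h1, fun i hi => h2 i (Finset.mem_insert_of_mem hi)⟩,
                h2 i₀ (Finset.mem_insert_self _ _)⟩
  -- splitting step (independence)
  set u : Fin n → Prop := fun j => ∃ t, J t = j with hudef
  have hsplit : WW (fun a => allJ a ∧ okRc a) = WW allJ * WW okRc := by
    simp only [hWWdef]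
    have := cube_split p u (Ind allJ) (Ind okRc)
      (fun a b hab => by
        have hiff : allJ a ↔ allJ b := by
          constructor <;> intro h t
          · rw [← hab (J t) ⟨t, rfl⟩]; exact h t
          · rw [hab (J t) ⟨t, rfl⟩]; exact h t
        by_cases hca : allJ a
        · exact (if_pos hca : Ind allJ a = 1).trans
            (if_pos (hiff.1 hca) : Ind allJ b = 1).symm
        · exact (if_neg hca : Ind allJ a = 0).trans
            (if_neg (fun hb => hca (hiff.2 hb)) : Ind allJ b = 0).symm)
      (fun a b hab => by
        have hQiff : ∀ i, (∀ t, A i (J t) = 0) → (Q i a ↔ Q i b) := by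
          intro i hz
          have hsum : ∑ j, A i j * ((⌊α * x j⌋ : ℝ) + val (a j))
              = ∑ j, A i j * ((⌊α * x j⌋ : ℝ) + val (b j)) := by
            refine Finset.sum_congr rfl fun j _ => ?_
            by_cases hj : u j
            · obtain ⟨t, rfl⟩ := hj
              rw [hz t]; ring
            · rw [hab j hj]
          simp only [hQdef]
          rw [hsum]
        have hiff : okRc a ↔ okRc b := by
          constructor <;> intro h i hz
          · exact fun hQb => h i hz ((hQiff i hz).2 hQb)
          · exact fun hQa => h i hz ((hQiff i hz).1 hQa)
        by_cases hca : okRc a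
        · exact (if_pos hca : Ind okRc a = 1).trans
            (if_pos (hiff.1 hca) : Ind okRc b = 1).symm
        · exact (if_neg hca : Ind okRc a = 0).trans
            (if_neg (fun hb => hca (hiff.2 hb)) : Ind okRc b = 0).symm)
    calc ∑ a, cubeW p a * Ind (fun a => allJ a ∧ okRc a) a
        = ∑ a, cubeW p a * (Ind allJ a * Ind okRc a) :=
          Finset.sum_congr rfl fun a _ => by simp only [hIndmul]
      _ = (∑ a, cubeW p a * Ind allJ a) * (∑ a, cubeW p a * Ind okRc a) := this
  -- computing WW allJ
  have hWWallJ : WW allJ = ∏ t, p (J t) := by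
    have hIndprod : ∀ a, Ind allJ a
        = ∏ j, (if u j then (if a j then (1:ℝ) else 0) else 1) := by
      intro a
      by_cases hall : allJ a
      · have h1 : Ind allJ a = 1 := if_pos hall
        rw [h1]
        refine (Finset.prod_eq_one fun j _ => ?_).symm
        by_cases hj : u j
        · rw [if_pos hj]
          obtain ⟨t, rfl⟩ := hj
          simp [hall t]
        · exact if_neg hj
      · have h0 : Ind allJ a = 0 := if_neg hall
        rw [h0]
        obtain ⟨t, ht⟩ := not_forall.1 hall
        rw [Bool.not_eq_true] at ht
        refine (Finset.prod_eq_zero (Finset.mem_univ (J t)) ?_).symm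
        rw [if_pos ⟨t, rfl⟩, ht]
        simp
    rw [hWWdef]
    calc ∑ a, cubeW p a * Ind allJ a
        = ∑ a : Fin n → Bool, ∏ j, ((if a j then p j else 1 - p j) *
            (if u j then (if a j then (1:ℝ) else 0) else 1)) := by
          refine Finset.sum_congr rfl fun a _ => ?_
          rw [hIndprod a, cubeW, ← Finset.prod_mul_distrib]
      _ = ∏ j, ((if (false : Bool) then p j else 1 - p j) *
            (if u j then (if (false : Bool) then (1:ℝ) else 0) else 1) +
            (if (true : Bool) then p j else 1 - p j) *
            (if u j then (if (true : Bool) then (1:ℝ) else 0) else 1)) := by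
          exact cube_sum_prod (fun j v => (if v then p j else 1 - p j) *
            (if u j then (if v then (1:ℝ) else 0) else 1))
      _ = ∏ j, (if u j then p j else 1) := by
          refine Finset.prod_congr rfl fun j _ => ?_
          by_cases hj : u j <;> simp [hj] <;> ring
      _ = ∏ j ∈ Finset.univ.filter u, p j := by rw [Finset.prod_filter]
      _ = ∏ j ∈ Finset.univ.image J, p j := by
          refine Finset.prod_congr ?_ fun _ _ => rfl
          ext j
          simp [hudef, eq_comm]
      _ = ∏ t, p (J t) := Finset.prod_image fun t _ t' _ h => hJ.injective h
  -- identification of measures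
  have hEset : ∀ i, E i = {ω | Q i (pat ω)} := by
    intro i
    rw [hE i]
    ext ω
    simp only [Set.mem_setOf_eq, hQdef]
    rw [Finset.sum_congr rfl fun j _ => by rw [hval j ω]]
  have hSset : (⋂ i, (E i)ᶜ) = {ω | ok (pat ω)} := by
    ext ω
    simp only [Set.mem_iInter, Set.mem_compl_iff, hEset, Set.mem_setOf_eq, hokdef]
  have hSFset : (⋂ i, (E i)ᶜ) ∩ (⋂ t, {ω | X (J t) ω = 1})
      = {ω | ok (pat ω) ∧ allJ (pat ω)} := by
    ext ω
    simp only [Set.mem_inter_iff, hSset, Set.mem_setOf_eq, Set.mem_iInter, hallJdef, hpat1]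
  -- measurability of S
  have hEmeas : ∀ i, MeasurableSet (E i) := by
    intro i
    rw [hE i]
    exact measurableSet_lt (Finset.measurable_sum _ fun j _ =>
      ((measurable_const.add (hXmeas j)).const_mul (A i j))) measurable_const
  have hSmeas : MeasurableSet (⋂ i, (E i)ᶜ) :=
    MeasurableSet.iInter fun i => (hEmeas i).compl
  -- rewrite the goal
  rw [cond_apply hSmeas, ENNReal.toReal_mul, ENNReal.toReal_inv, hSFset, hSset]
  rw [hWW (fun a => ok a ∧ allJ a), hWW ok]
  have hPE : ∀ i, (ℙ (E i)).toReal = WW (Q i) := by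
    intro i
    rw [hEset i, hWW]
  rw [Finset.prod_congr rfl fun i (_ : i ∈ R) => by rw [hPE i, ← hWWcompl (Q i)]]
  -- positivity
  have hDpos : 0 < WW ok := by
    rw [← hWW ok, ← hSset]
    exact ENNReal.toReal_pos hZpos.ne' (measure_ne_top _ _)
  have hfacpos : ∀ i, 0 < WW (fun a => ¬ Q i a) := fun i =>
    lt_of_lt_of_le hDpos (hWWmono _ _ fun a h => h i)
  have hpipos : 0 < ∏ i ∈ R, WW (fun a => ¬ Q i a) :=
    Finset.prod_pos fun i _ => hfacpos i
  have hPpnn : 0 ≤ ∏ t, p (J t) := Finset.prod_nonneg fun t _ => (hp (J t)).1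
  -- the chain of inequalities
  rw [inv_mul_eq_div, div_le_div_iff₀ hDpos hpipos]
  have hNum : WW (fun a => ok a ∧ allJ a) ≤ (∏ t, p (J t)) * WW okRc := by
    calc WW (fun a => ok a ∧ allJ a) ≤ WW (fun a => allJ a ∧ okRc a) :=
          hWWmono _ _ fun a h => ⟨h.2, fun i _ => h.1 i⟩
      _ = WW allJ * WW okRc := hsplit
      _ = (∏ t, p (J t)) * WW okRc := by rw [hWWallJ]
  have hDen : WW okRc * ∏ i ∈ R, WW (fun a => ¬ Q i a) ≤ WW ok := by
    refine le_trans (claim R) (le_of_eq (hWWcongr _ _ fun a => ?_))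
    constructor
    · rintro ⟨h1, h2⟩ i
      by_cases hiR : i ∈ R
      · exact h2 i hiR
      · refine h1 i fun t => ?_
        rw [hRdef] at hiR
        simp only [Finset.mem_filter, Finset.mem_univ, true_and, not_exists, not_not] at hiR
        exact hiR t
    · intro h
      exact ⟨fun i _ => h i, fun i _ => h i⟩
  calc WW (fun a => ok a ∧ allJ a) * ∏ i ∈ R, WW (fun a => ¬ Q i a)
      ≤ ((∏ t, p (J t)) * WW okRc) * ∏ i ∈ R, WW (fun a => ¬ Q i a) :=
        mul_le_mul_of_nonneg_right hNum hpipos.le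
    _ = (∏ t, p (J t)) * (WW okRc * ∏ i ∈ R, WW (fun a => ¬ Q i a)) := by ring
    _ ≤ (∏ t, p (J t)) * WW ok := mul_le_mul_of_nonneg_left hDen hPpnn
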